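/- For a nonnegative integer k, Σ_{j=0}^{k} (-1)^j q^{binom(j,2) - kj} qbinom(k, j) · q^j (x;q)_j / (q;q)_j = (x q^{-1}; q^{-1})_k / (q^{-1}; q^{-1})_k, as an identity of rational functions in q and x. -/

import Mathlib

open Polynomial Finset

/-- The variable `q` as a rational function over `ℚ`. -/
noncomputable def qv : RatFunc ℚ := RatFunc.X

/-- The q-Pochhammer symbol `(x; t)_k = (1-x)(1-xt)⋯(1-xt^{k-1})`. -/
noncomputable def qPochAt (x t : RatFunc ℚ) (k : ℕ) : RatFunc ℚ :=
  ∏ i ∈ Finset.range k, (1 - x * t ^ i)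

/-- The Gaussian binomial coefficient `[α choose k]_t = (t^{α-k+1}; t)_k / (t; t)_k`
with integer upper argument. -/
noncomputable def qbinomAt (t : RatFunc ℚ) (α : ℤ) (k : ℕ) : RatFunc ℚ :=
  (∏ i ∈ Finset.range k, (1 - t ^ (α - k + 1 + i))) /
    (∏ i ∈ Finset.range k, (1 - t ^ (i + 1)))

/-- The Gaussian binomial coefficient in the variable `q`. -/
noncomputable def qbinom (α : ℤ) (k : ℕ) : RatFunc ℚ := qbinomAt qv α k

/-- The image of an integer polynomial in `RatFunc ℚ`. -/
noncomputable def toF (g : Polynomial ℤ) : RatFunc ℚ :=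
  Polynomial.aeval (RatFunc.X : RatFunc ℚ) g

/-- `A ≡ B (mod Φ_n(q)^m)` in the localization of `ℤ[q]` at polynomials coprime
to `Φ_n`: there are `f g : ℤ[q]` with `Φ_n ∤ g` and `(A - B) * g = Φ_n^m * f`. -/
def modCong (n m : ℕ) (A B : RatFunc ℚ) : Prop :=
  ∃ f g : Polynomial ℤ, ¬ (Polynomial.cyclotomic n ℤ ∣ g) ∧
    (A - B) * toF g = toF ((Polynomial.cyclotomic n ℤ) ^ m * f)

/-- The q-integer `[m]_q = (1-q^m)/(1-q)`. -/
noncomputable def qint (m : ℤ) : RatFunc ℚ := (1 - qv ^ m) / (1 - qv)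



lemma hq0 : qv ≠ 0 := RatFunc.X_ne_zero

lemma qv_pow_ne_one (m : ℕ) (hm : 1 ≤ m) : qv ^ m ≠ 1 := by
  intro h
  have h2 : (algebraMap ℚ[X] (RatFunc ℚ)) (X ^ m) = (algebraMap ℚ[X] (RatFunc ℚ)) 1 := by
    rw [map_pow, map_one, RatFunc.algebraMap_X]; exact h
  have h3 : (X : ℚ[X]) ^ m = 1 := RatFunc.algebraMap_injective ℚ h2
  have := congrArg Polynomial.natDegree h3
  simp [Polynomial.natDegree_X_pow] at this
  omega

lemma factor_ne (m : ℕ) (hm : 1 ≤ m) : (1 : RatFunc ℚ) - qv ^ m ≠ 0 := by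
  intro h
  exact qv_pow_ne_one m hm (by linear_combination -h)


noncomputable def W (a n : ℕ) : RatFunc ℚ := ∏ i ∈ Finset.range n, (1 - qv ^ (a + 1 + i))

lemma W_ne (a n : ℕ) : W a n ≠ 0 := by
  refine Finset.prod_ne_zero_iff.2 fun i _ => factor_ne _ (by omega)

lemma W_succ_top (a n : ℕ) : W a (n+1) = W a n * (1 - qv ^ (a+1+n)) := by
  rw [W, Finset.prod_range_succ]; rfl

lemma W_succ_bot (a n : ℕ) : W a (n+1) = (1 - qv ^ (a+1)) * W (a+1) n := by
  rw [W, Finset.prod_range_succ', mul_comm, W]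
  congr 1
  apply Finset.prod_congr rfl; intro i _; congr 2; omega

lemma W_add (j m : ℕ) : W 0 (j + m) = W 0 j * W j m := by
  rw [W, Finset.prod_range_add, W, W]
  congr 1
  apply Finset.prod_congr rfl; intro i _; congr 2; omega

def ee (k j : ℕ) : ℤ := (j:ℤ)*((j:ℤ)-1)/2 + j - k*j

noncomputable def cc (k j : ℕ) : RatFunc ℚ :=
  (-1)^j * qv ^ (ee k j) * (W (k-j) j / W 0 j) * W j (k-j)

lemma C2_succ (j : ℕ) : ((j:ℤ)+1)*((j:ℤ)+1-1)/2 = (j:ℤ)*((j:ℤ)-1)/2 + j := by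
  have : ((j:ℤ)+1)*((j:ℤ)+1-1) = (j:ℤ)*((j:ℤ)-1) + (j:ℤ)*2 := by ring
  rw [this, Int.add_mul_ediv_right _ _ (by norm_num)]

lemma ee_step (k j : ℕ) : ee (k+1) (j+1) = ee k (j+1) - ((j:ℤ)+1) := by
  simp only [ee]; push_cast; ring

lemma ee_down (k j m : ℕ) (hk : k = j + m + 1) : ee k j = ee k (j+1) + m := by
  simp only [ee]; push_cast [C2_succ j, hk]; ring

lemma E_succ (x : RatFunc ℚ) (j : ℕ) :
    qPochAt x qv (j+1) = qPochAt x qv j * (1 - x * qv ^ j) := by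
  rw [qPochAt, Finset.prod_range_succ]; rfl

lemma W_zero (a : ℕ) : W a 0 = 1 := Finset.prod_range_zero _

lemma rec0 (k : ℕ) : cc (k+1) 0 = (1 - qv ^ (k+1)) * cc k 0 := by
  have h := W_succ_top 0 k
  have e1 : 0+1+k = k+1 := by omega
  rw [e1] at h
  simp [cc, ee, W_zero, h]
  ring

lemma recTop (k : ℕ) : cc (k+1) (k+1) = -(qv ^ (-(k:ℤ)) * cc k k) := by
  have h1 : ee (k+1) (k+1) = ee k k - k := by
    simp only [ee]; push_cast [C2_succ k]; ring
  simp [cc, Nat.sub_self, W_zero, div_self (W_ne 0 (k+1)), div_self (W_ne 0 k), h1]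
  rw [sub_eq_add_neg, zpow_add₀ hq0, zpow_neg, zpow_natCast]
  ring

lemma recA (k j : ℕ) (hj : j < k) :
    cc (k+1) (j+1) = (qv ^ (-(j:ℤ)-1) - qv ^ (k+1)) * cc k (j+1) - qv ^ (-(j:ℤ)) * cc k j := by
  obtain ⟨m, hk⟩ : ∃ m, k = j + m + 1 := ⟨k - j - 1, by omega⟩
  subst hk
  have s1 : j + m + 1 + 1 - (j+1) = m + 1 := by omega
  have s2 : j + m + 1 - (j+1) = m := by omega
  have s3 : j + m + 1 - j = m + 1 := by omega
  have hZ : qv ^ (ee (j+m+1+1) (j+1)) = qv ^ (ee (j+m+1) (j+1)) * (qv ^ (j+1))⁻¹ := by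
    have h : ee (j+m+1+1) (j+1) = ee (j+m+1) (j+1) + (-((j+1:ℕ):ℤ)) := by
      rw [ee_step]; push_cast; ring
    rw [h, zpow_add₀ hq0, zpow_neg, zpow_natCast]
  have hz2 : qv ^ (ee (j+m+1) j) = qv ^ (ee (j+m+1) (j+1)) * qv ^ m := by
    rw [ee_down (j+m+1) j m rfl, zpow_add₀ hq0, zpow_natCast]
  have n1 : qv ^ (-(j:ℤ)) = (qv ^ j)⁻¹ := by rw [zpow_neg, zpow_natCast]
  have n2 : qv ^ (-(j:ℤ)-1) = (qv ^ (j+1))⁻¹ := by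
    have h : (-(j:ℤ)-1) = -((j+1:ℕ):ℤ) := by push_cast; ring
    rw [h, zpow_neg, zpow_natCast]
  have w1 : W (m+1) (j+1) = W (m+1) j * (1 - qv ^ (j+m+1+1)) := by
    rw [W_succ_top]; congr 3; omega
  have w2 : W (j+1) (m+1) = W (j+1) m * (1 - qv ^ (j+m+1+1)) := by
    rw [W_succ_top]; congr 3; omega
  have w3 : W m (j+1) = (1 - qv ^ (m+1)) * W (m+1) j := by
    rw [W_succ_bot]
  have w4 : W 0 (j+1) = W 0 j * (1 - qv ^ (j+1)) := by
    rw [W_succ_top]; congr 3; omega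
  have w5 : W j (m+1) = (1 - qv ^ (j+1)) * W (j+1) m := by
    rw [W_succ_bot]
  simp only [cc, s1, s2, s3, hZ, hz2, n1, n2, w1, w2, w3, w4, w5]
  have d1 : W 0 j ≠ 0 := W_ne 0 j
  have d2 : (1 : RatFunc ℚ) - qv ^ (j+1) ≠ 0 := factor_ne _ (by omega)
  have d3 : (qv : RatFunc ℚ) ^ j ≠ 0 := pow_ne_zero _ hq0
  have d4 : (qv : RatFunc ℚ) ^ (j+1) ≠ 0 := pow_ne_zero _ hq0
  field_simp
  ring

lemma npow_neg (j : ℕ) : qv ^ (-(j:ℤ)) = (qv ^ j)⁻¹ := by rw [zpow_neg, zpow_natCast]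

lemma npow_neg' (j : ℕ) : qv ^ (-(j:ℤ)-1) = (qv ^ (j+1))⁻¹ := by
  have h : (-(j:ℤ)-1) = -((j+1:ℕ):ℤ) := by push_cast; ring
  rw [h, zpow_neg, zpow_natCast]

lemma xE (x : RatFunc ℚ) (j : ℕ) :
    x * qPochAt x qv j = (qv^j)⁻¹ * qPochAt x qv j - (qv^j)⁻¹ * qPochAt x qv (j+1) := by
  rw [E_succ]
  have d : (qv:RatFunc ℚ) ^ j ≠ 0 := pow_ne_zero _ hq0
  field_simp
  ring

lemma main (k : ℕ) : ∀ x : RatFunc ℚ,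
    ∑ j ∈ range (k+1), cc k j * qPochAt x qv j = ∏ i ∈ range k, (x - qv^(i+1)) := by
  induction k with
  | zero => intro x; simp [cc, ee, W_zero, qPochAt]
  | succ k ih =>
    intro x
    rw [Finset.prod_range_succ, ← ih x]
    have key : ∀ j : ℕ, cc k j * qPochAt x qv j * (x - qv^(k+1)) =
        ((qv^j)⁻¹ - qv^(k+1)) * (cc k j * qPochAt x qv j)
          - (qv^j)⁻¹ * (cc k j * qPochAt x qv (j+1)) := by
      intro j
      linear_combination (cc k j) * xE x j
    rw [Finset.sum_mul]
    rw [Finset.sum_congr rfl (fun j _ => key j)]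
    rw [Finset.sum_sub_distrib]
    rw [Finset.sum_range_succ' (fun j => ((qv^j)⁻¹ - qv^(k+1)) * (cc k j * qPochAt x qv j)) k]
    rw [Finset.sum_range_succ (fun j => (qv^j)⁻¹ * (cc k j * qPochAt x qv (j+1))) k]
    rw [Finset.sum_range_succ' (fun j => cc (k+1) j * qPochAt x qv j) (k+1)]
    rw [Finset.sum_range_succ (fun j => cc (k+1) (j+1) * qPochAt x qv (j+1)) k]
    have hs : ∑ j ∈ range k, cc (k+1) (j+1) * qPochAt x qv (j+1)
        = ∑ j ∈ range k, (((qv^(j+1))⁻¹ - qv^(k+1)) * (cc k (j+1) * qPochAt x qv (j+1))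
            - (qv^j)⁻¹ * (cc k j * qPochAt x qv (j+1))) := by
      refine Finset.sum_congr rfl fun j hj => ?_
      rw [recA k j (Finset.mem_range.mp hj), npow_neg, npow_neg']
      ring
    rw [hs, Finset.sum_sub_distrib, rec0 k, recTop k, npow_neg]
    simp only [pow_zero, inv_one]
    ring



lemma qPoch_qq (j : ℕ) : qPochAt qv qv j = W 0 j := by
  rw [qPochAt, W]
  refine Finset.prod_congr rfl fun i _ => ?_
  rw [← pow_succ']
  have h0 : 0 + 1 + i = i + 1 := by omega
  rw [h0]

lemma qbinom_eq (k j : ℕ) (hjk : j ≤ k) : qbinom k j = W (k-j) j / W 0 j := by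
  rw [qbinom, qbinomAt]
  congr 1
  · rw [W]
    refine Finset.prod_congr rfl fun i _ => ?_
    congr 1
    have h : ((k:ℤ) - (j:ℤ) + 1 + (i:ℤ)) = ((k - j + 1 + i : ℕ) : ℤ) := by omega
    rw [h, zpow_natCast]
  · rw [W]
    refine Finset.prod_congr rfl fun i _ => ?_
    congr 2
    omega

lemma term_eq (k j : ℕ) (hjk : j ≤ k) (x : RatFunc ℚ) :
    (-1 : RatFunc ℚ) ^ j * qv ^ ((j : ℤ) * ((j : ℤ) - 1) / 2 - (k : ℤ) * j) *
      qbinom k j * (qv ^ j * qPochAt x qv j / qPochAt qv qv j) * W 0 k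
      = cc k j * qPochAt x qv j := by
  rw [qbinom_eq k j hjk, qPoch_qq]
  have hsplit : W 0 k = W 0 j * W j (k-j) := by
    rw [← W_add]; congr 1; omega
  have hexp : qv ^ (ee k j) = qv ^ ((j : ℤ) * ((j : ℤ) - 1) / 2 - (k : ℤ) * j) * qv ^ j := by
    rw [ee, ← zpow_natCast qv j, ← zpow_add₀ hq0]
    congr 1
    ring
  rw [cc, hexp, hsplit]
  have d1 : W 0 j ≠ 0 := W_ne 0 j
  field_simp

/-- `Σ_{j=0}^k (-1)^j q^{binom(j,2)-kj} [k choose j]_q · q^j (x;q)_j/(q;q)_j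
  = (xq^{-1};q^{-1})_k/(q^{-1};q^{-1})_k`. -/
theorem stmt11 (k : ℕ) (x : RatFunc ℚ) :
    ∑ j ∈ Finset.range (k + 1),
        (-1 : RatFunc ℚ) ^ j * qv ^ ((j : ℤ) * ((j : ℤ) - 1) / 2 - (k : ℤ) * j) *
          qbinom k j * (qv ^ j * qPochAt x qv j / qPochAt qv qv j) =
      qPochAt (x * qv⁻¹) qv⁻¹ k / qPochAt qv⁻¹ qv⁻¹ k := by
  have hden2 : qPochAt qv⁻¹ qv⁻¹ k ≠ 0 := by
    rw [qPochAt]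
    refine Finset.prod_ne_zero_iff.2 fun i _ h => ?_
    have h1 : (qv:RatFunc ℚ)⁻¹ * (qv⁻¹)^i = 1 := by linear_combination -h
    rw [← pow_succ', inv_pow, inv_eq_one] at h1
    exact qv_pow_ne_one (i+1) (by omega) h1
  have hW : W 0 k ≠ 0 := W_ne 0 k
  have hR : qPochAt (x * qv⁻¹) qv⁻¹ k / qPochAt qv⁻¹ qv⁻¹ k
      = (∏ i ∈ range k, (x - qv^(i+1))) / W 0 k := by
    rw [div_eq_div_iff hden2 hW]
    rw [qPochAt, qPochAt, W, ← Finset.prod_mul_distrib, ← Finset.prod_mul_distrib]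
    refine Finset.prod_congr rfl fun i _ => ?_
    have d : (qv:RatFunc ℚ)^(i+1) ≠ 0 := pow_ne_zero _ hq0
    have hi : (qv:RatFunc ℚ)⁻¹ * (qv⁻¹)^i = (qv^(i+1))⁻¹ := by
      rw [← pow_succ', inv_pow]
    have he : 0 + 1 + i = i + 1 := by omega
    rw [he, mul_assoc, hi]
    field_simp
    ring
  rw [hR, eq_div_iff hW, Finset.sum_mul]
  rw [Finset.sum_congr rfl (fun j hj => term_eq k j (by have := Finset.mem_range.mp hj; omega) x)]
  · exact main k x
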